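/- Let m ≥ 1, let s be an integer with 0 ≤ s ≤ q-1, and set t_RS = ⌊(q-s-1)/2⌋. Then any word can be uniquely decoded in Cube_q(s,m) up to (t_RS+1)^m - 1 errors: if c_1, c_2 ∈ Cube_q(s,m) and y ∈ F_q^n satisfy d_H(y,c_1) ≤ (t_RS+1)^m - 1 and d_H(y,c_2) ≤ (t_RS+1)^m - 1, then c_1 = c_2. -/

import Mathlib

open MvPolynomial Finset Pointwise

noncomputable section

/-- Evaluation of a multivariate polynomial at all points of `F^m`. -/
def evalPt {F : Type} [Field F] {m : ℕ} (f : MvPolynomial (Fin m) F) : (Fin m → F) → F :=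
  fun P => MvPolynomial.eval P f

/-- The monomial code `C_A = ev(F_q[A])`, the evaluations of the polynomials
whose monomial support is contained in `A`. -/
def monomialCode (F : Type) [Field F] (m : ℕ) (A : Set (Fin m →₀ ℕ)) :
    Set ((Fin m → F) → F) :=
  { v | ∃ f : MvPolynomial (Fin m) F, (↑f.support : Set (Fin m →₀ ℕ)) ⊆ A ∧ v = evalPt f }

/-- Exponent set of the Reed–Muller code `RM_q(s,m)` (empty when `s < 0`). -/
def RMset (q m : ℕ) (s : ℤ) : Set (Fin m →₀ ℕ) :=
  { i | (∀ j, i j < q) ∧ (∑ j, (i j : ℤ)) ≤ s }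

/-- Exponent set of the hyperbolic code `Hyp_q(d,m)`. -/
def Hypset (q m d : ℕ) : Set (Fin m →₀ ℕ) :=
  { i | (∀ j, i j < q) ∧ d ≤ ∏ j, (q - i j) }

/-- Exponent set of the cube code `Cube_q(s,m)`. -/
def Cubeset (m s : ℕ) : Set (Fin m →₀ ℕ) :=
  { i | ∀ j, i j ≤ s }

/-- Minimum distance of a code: least Hamming weight of a nonzero codeword. -/
def minDist {F : Type} [Field F] [Fintype F] [DecidableEq F] {m : ℕ}
    (C : Set ((Fin m → F) → F)) : ℕ :=
  sInf { w | ∃ v ∈ C, v ≠ 0 ∧ hammingNorm v = w }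

/-- Hamming distance from a word to a code. -/
def distToCode {F : Type} [Field F] [Fintype F] [DecidableEq F] {m : ℕ}
    (y : (Fin m → F) → F) (C : Set ((Fin m → F) → F)) : ℕ :=
  sInf { w | ∃ c ∈ C, hammingDist y c = w }

/-- `i`-fold Minkowski sum of `H` with itself (`0`-fold sum is `{0}`). -/
def iMink {m : ℕ} (H : Set (Fin m →₀ ℕ)) : ℕ → Set (Fin m →₀ ℕ)
  | 0 => {0}
  | i + 1 => iMink H i + H

/-- The sets `L(d,r,i)` from the Geil–Matsumoto list-decoding algorithm. -/
def Lset (q m d r i : ℕ) : Set (Fin m →₀ ℕ) :=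
  { a | (∀ j, a j < q) ∧ ∀ x ∈ iMink (Hypset q m d) i, a + x ∈ Hypset q m (r + 1) }


section Aux

lemma arith (a d : ℕ) (ha : 1 ≤ a) (h : 2 * a ≤ d + 1) (m : ℕ) : 2 * a ^ m ≤ d ^ m + 1 := by
  induction m with
  | zero => simp
  | succ m ih =>
    have had : a ≤ d := by omega
    have hd1 : 1 ≤ d ^ m := Nat.one_le_pow _ _ (by omega)
    have h2 : (a - 1) * 1 ≤ (d - a) * d ^ m := Nat.mul_le_mul (by omega) hd1
    have h3 : a * d ^ m + (d - a) * d ^ m = d ^ (m + 1) := by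
      rw [← Nat.add_mul, pow_succ]; rw [show a + (d - a) = d by omega]; ring
    calc 2 * a ^ (m+1) = a * (2 * a ^ m) := by ring
    _ ≤ a * (d ^ m + 1) := Nat.mul_le_mul_left a ih
    _ = a * d ^ m + a := by ring
    _ ≤ d ^ (m+1) + 1 := by omega


lemma key {F : Type} [Field F] [Fintype F] [DecidableEq F] (s : ℕ) (hs : s < Fintype.card F) :
    ∀ (m : ℕ) (h : MvPolynomial (Fin m) F), h ≠ 0 →
      (∀ i ∈ h.support, ∀ j, i j ≤ s) →
      (Fintype.card F - s) ^ m ≤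
        (Finset.univ.filter (fun P : Fin m → F => MvPolynomial.eval P h ≠ 0)).card := by
  intro m
  induction m with
  | zero =>
    intro h hne _
    rw [pow_zero]
    refine Finset.card_pos.mpr ⟨(fun i => i.elim0), ?_⟩
    simp only [mem_filter, mem_univ, true_and]
    rw [MvPolynomial.eq_C_of_isEmpty h] at hne ⊢
    rw [MvPolynomial.eval_C]
    exact fun h0 => hne (by rw [h0, map_zero])
  | succ m ih =>
    intro h hne hsupp
    set q := Fintype.card F with hq
    set e := finSuccEquiv F m h with hedef
    have he : e ≠ 0 := fun h0 => hne ((finSuccEquiv F m).injective (by simp [← hedef, h0]))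
    have hdeg : e.natDegree ≤ s := by
      rw [hedef, natDegree_finSuccEquiv]
      exact degreeOf_le_iff.mpr (fun i hi => hsupp i hi 0)
    set g := e.coeff e.natDegree with hgdef
    have hg : g ≠ 0 := Polynomial.leadingCoeff_ne_zero.mpr he
    have hgsupp : ∀ i ∈ g.support, ∀ j, i j ≤ s := by
      intro i hi j
      rw [MvPolynomial.mem_support_iff, hgdef, hedef, finSuccEquiv_coeff_coeff] at hi
      have := hsupp _ (MvPolynomial.mem_support_iff.mpr hi) j.succ
      simpa [Finsupp.cons_succ] using this
    set S' := Finset.univ.filter (fun P' : Fin m → F => MvPolynomial.eval P' g ≠ 0) with hS'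
    have hIH : (q - s) ^ m ≤ S'.card := ih g hg hgsupp
    set U := Finset.univ.filter
      (fun px : F × (Fin m → F) => MvPolynomial.eval (Fin.cons px.1 px.2) h ≠ 0) with hU
    set W := Finset.univ.filter (fun px : F × (Fin m → F) =>
      px.2 ∈ S' ∧ Polynomial.eval px.1 (Polynomial.map (MvPolynomial.eval px.2) e) ≠ 0) with hW
    have hWU : W ⊆ U := by
      intro px hpx
      rw [hW, Finset.mem_filter] at hpx
      rw [hU, Finset.mem_filter]
      refine ⟨Finset.mem_univ _, ?_⟩
      rw [eval_eq_eval_mv_eval']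
      exact hpx.2.2
    have hfib : W.card = ∑ P' ∈ S', (W.filter (fun px => px.2 = P')).card :=
      Finset.card_eq_sum_card_fiberwise (fun px hpx => (Finset.mem_filter.mp hpx).2.1)
    have hlow : ∀ P' ∈ S', q - s ≤ (W.filter (fun px => px.2 = P')).card := by
      intro P' hP'
      set p := Polynomial.map (MvPolynomial.eval P') e with hp
      have hpne : p ≠ 0 := by
        intro h0
        have hcm : p.coeff e.natDegree = MvPolynomial.eval P' g := Polynomial.coeff_map _ _
        rw [h0] at hcm
        exact (Finset.mem_filter.mp hP').2 (by simpa using hcm.symm)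
      have hpdeg : p.natDegree ≤ s := le_trans (Polynomial.natDegree_map_le) hdeg
      set X := Finset.univ.filter (fun x : F => Polynomial.eval x p ≠ 0) with hX
      have hZ : (Finset.univ.filter (fun x : F => Polynomial.eval x p = 0)).card ≤ s := by
        refine le_trans (le_trans (Finset.card_le_card ?_) p.roots.toFinset_card_le)
          (le_trans (Polynomial.card_roots' p) hpdeg)
        intro x hx
        rw [Multiset.mem_toFinset, Polynomial.mem_roots hpne]
        exact (Finset.mem_filter.mp hx).2
      have hXcard : q - s ≤ X.card := by
        have hsplit := Finset.card_filter_add_card_filter_not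
          (s := Finset.univ (α := F)) (p := fun x => Polynomial.eval x p = 0)
        simp only [Finset.card_univ, ← hq] at hsplit
        have hXeq : X = Finset.univ.filter (fun a => ¬ Polynomial.eval a p = 0) := rfl
        rw [hXeq]
        omega
      refine le_trans hXcard (Finset.card_le_card_of_injOn (fun x => (x, P')) ?_ ?_)
      · intro x hx
        rw [Finset.mem_coe, Finset.mem_filter] at hx
        rw [Finset.mem_coe, Finset.mem_filter, hW, Finset.mem_filter]
        exact ⟨⟨Finset.mem_univ _, hP', hx.2⟩, rfl⟩
      · intro x _ x' _ hxx'
        exact (Prod.mk.injEq _ _ _ _ ▸ hxx').1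
    have hWcard : (q - s) ^ m * (q - s) ≤ W.card := by
      rw [hfib]
      calc (q - s) ^ m * (q - s) ≤ S'.card * (q - s) := Nat.mul_le_mul_right _ hIH
      _ = ∑ _P' ∈ S', (q - s) := by rw [Finset.sum_const, smul_eq_mul]
      _ ≤ _ := Finset.sum_le_sum hlow
    have hTU : (Finset.univ.filter
        (fun P : Fin (m+1) → F => MvPolynomial.eval P h ≠ 0)).card = U.card := by
      refine (Finset.card_bij (fun px _ => Fin.cons px.1 px.2) ?_ ?_ ?_).symm
      · intro px hpx
        rw [hU, Finset.mem_filter] at hpx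
        rw [Finset.mem_filter]
        exact ⟨Finset.mem_univ _, hpx.2⟩
      · intro px _ px' _ heq
        have h0 := congrFun heq 0
        simp only [Fin.cons_zero] at h0
        have h1 : px.2 = px'.2 := funext fun j => by
          have := congrFun heq j.succ
          simpa [Fin.cons_succ] using this
        exact Prod.ext h0 h1
      · intro P hP
        rw [Finset.mem_filter] at hP
        refine ⟨(P 0, Fin.tail P), ?_, Fin.cons_self_tail P⟩
        rw [hU, Finset.mem_filter]
        refine ⟨Finset.mem_univ _, ?_⟩
        rw [Fin.cons_self_tail]
        exact hP.2
    rw [hTU, pow_succ]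
    exact le_trans hWcard (Finset.card_le_card hWU)

end Aux

/-- with `t_RS = ⌊(q-s-1)/2⌋`, unique decoding in `Cube_q(s,m)` up to
`(t_RS+1)^m - 1` errors. -/
theorem statement14 (F : Type) [Field F] [Fintype F] [DecidableEq F]
    (q m s : ℕ) (hq : Fintype.card F = q) (hm : 1 ≤ m) (hs : s ≤ q - 1)
    (t : ℕ) (ht : t = (q - s - 1) / 2)
    (c₁ c₂ y : (Fin m → F) → F)
    (hc₁ : c₁ ∈ monomialCode F m (Cubeset m s))
    (hc₂ : c₂ ∈ monomialCode F m (Cubeset m s))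
    (h₁ : hammingDist y c₁ ≤ (t + 1) ^ m - 1)
    (h₂ : hammingDist y c₂ ≤ (t + 1) ^ m - 1) :
    c₁ = c₂ := by
  have hq1 : 1 ≤ q := hq ▸ Fintype.card_pos
  have hsq : s < q := by omega
  obtain ⟨f, hf, rfl⟩ := hc₁
  obtain ⟨g, hg, rfl⟩ := hc₂
  by_contra hne
  have hfg : f - g ≠ 0 := by
    intro h0
    exact hne (by rw [sub_eq_zero] at h0; rw [h0])
  have hsupp : ∀ i ∈ (f - g).support, ∀ j, i j ≤ s := by
    intro i hi j
    have := MvPolynomial.support_sub (Fin m) f g hi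
    rcases Finset.mem_union.mp this with h' | h'
    · exact hf h' j
    · exact hg h' j
  have hkey := key s (hq ▸ hsq) m (f - g) hfg hsupp
  rw [hq] at hkey
  have hdist : (Finset.univ.filter
      (fun P : Fin m → F => MvPolynomial.eval P (f - g) ≠ 0)).card
      = hammingDist (evalPt f) (evalPt g) := by
    unfold hammingDist
    congr 1
    apply Finset.filter_congr
    intro P _
    simp only [map_sub, sub_ne_zero, evalPt]
  have htri : hammingDist (evalPt f) (evalPt g) ≤ ((t+1)^m - 1) + ((t+1)^m - 1) := by
    calc hammingDist (evalPt f) (evalPt g)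
        ≤ hammingDist (evalPt f) y + hammingDist y (evalPt g) := hammingDist_triangle _ _ _
    _ ≤ ((t+1)^m - 1) + ((t+1)^m - 1) := by
        rw [hammingDist_comm]
        exact Nat.add_le_add h₁ h₂
  have harith : 2 * (t + 1) ^ m ≤ (q - s) ^ m + 1 :=
    arith (t + 1) (q - s) (by omega) (by omega) m
  have hpow : 1 ≤ (t + 1) ^ m := Nat.one_le_pow _ _ (by omega)
  omega
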